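/- Fix constants l > 0, g > 0, μ > 0 and a Lipschitz continuous function a : ℝ → ℝ. Then the pendulum set-valued map Φ is upper semicontinuous at every point (q,p,t) ∈ ℝ³: β(Φ(q',p',t'), Φ(q,p,t)) → 0 as (q',p',t') → (q,p,t), where β(A,B) = sup_{a∈A} inf_{b∈B} |a−b|. -/

import Mathlib

open MeasureTheory Set Filter

noncomputable section

/-- The scalar right-hand side of the pendulum equation for the angular velocity, where
`s ∈ [-1, 1]` is the direction of the dry friction force:
`h (q, p, t, s) = (a t / l)·sin q − (μ / l)·|a t·cos q − l·p² + g·sin q|·s − (g / l)·cos q`. -/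
def hRHS (l g μ : ℝ) (a : ℝ → ℝ) (q p t s : ℝ) : ℝ :=
  (a t / l) * Real.sin q - (μ / l) * |a t * Real.cos q - l * p ^ 2 + g * Real.sin q| * s
    - (g / l) * Real.cos q

/-- The pendulum set-valued map `Φ`: a singleton `{(p, h (q, p, t, p / |p|))}` for `p ≠ 0`,
and the segment `{(0, h (q, 0, t, s)) : s ∈ [−1, 1]}` for `p = 0`. -/
def Phi (l g μ : ℝ) (a : ℝ → ℝ) (q p t : ℝ) : Set (ℝ × ℝ) :=
  if p ≠ 0 then {(p, hRHS l g μ a q p t (p / |p|))}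
  else {v : ℝ × ℝ | ∃ s ∈ Set.Icc (-1 : ℝ) 1, v = (0, hRHS l g μ a q 0 t s)}

lemma sign_div_eq {p p' : ℝ} (hp : p ≠ 0) (h : |p' - p| < |p|) :
    p' ≠ 0 ∧ p' / |p'| = p / |p| := by
  rcases hp.lt_or_gt with h1 | h1
  · have h2 := abs_lt.mp h
    have hp' : p' < 0 := by
      have := h2.2
      rw [abs_of_neg h1] at this
      linarith
    refine ⟨hp'.ne, ?_⟩
    rw [abs_of_neg hp', abs_of_neg h1, div_neg, div_neg, div_self hp'.ne, div_self hp]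
  · have h2 := abs_lt.mp h
    have hp' : 0 < p' := by
      have := h2.1
      rw [abs_of_pos h1] at this
      linarith
    refine ⟨hp'.ne', ?_⟩
    rw [abs_of_pos hp', abs_of_pos h1, div_self hp'.ne', div_self hp]

lemma dist3 {q q' p p' t t' δ : ℝ} (h1 : |q' - q| < δ) (h2 : |p' - p| < δ)
    (h3 : |t' - t| < δ) : dist ((q', p', t') : ℝ × ℝ × ℝ) (q, p, t) < δ := by
  rw [Prod.dist_eq, Prod.dist_eq]
  simp only [Real.dist_eq]
  exact max_lt h1 (max_lt h2 h3)

/-- **Upper semicontinuity of the pendulum set-valued map.** At every point `(q, p, t)`,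
the one-sided Hausdorff excess
`β(Φ (q', p', t'), Φ (q, p, t)) = sup_{w ∈ Φ (q', p', t')} dist (w, Φ (q, p, t))`
tends to `0` as `(q', p', t') → (q, p, t)`. -/
theorem stmt7 (l g μ : ℝ) (hl : 0 < l) (hg : 0 < g) (hμ : 0 < μ)
    (a : ℝ → ℝ) (K : NNReal) (ha : LipschitzWith K a) :
    ∀ q p t : ℝ, ∀ ε > 0, ∃ δ > 0, ∀ q' p' t' : ℝ,
      |q' - q| < δ → |p' - p| < δ → |t' - t| < δ →
      ∀ w ∈ Phi l g μ a q' p' t', Metric.infDist w (Phi l g μ a q p t) < ε := by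
  have hac : Continuous a := ha.continuous
  intro q p t ε hε
  by_cases hp : p = 0
  · subst hp
    -- p = 0 case
    set G : ℝ × ℝ × ℝ → ℝ × ℝ × ℝ := fun x =>
      ((a x.2.2 / l) * Real.sin x.1,
       (μ / l) * |a x.2.2 * Real.cos x.1 - l * x.2.1 ^ 2 + g * Real.sin x.1|,
       (g / l) * Real.cos x.1) with hG
    have hcont : ContinuousAt G (q, 0, t) := by
      apply Continuous.continuousAt
      fun_prop
    obtain ⟨δ₀, hδ₀, hδ⟩ := Metric.continuousAt_iff.mp hcont (ε/3) (by positivity)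
    refine ⟨min δ₀ (ε/2), lt_min hδ₀ (by positivity), ?_⟩
    intro q' p' t' hq hp' ht w hw
    have hq1 : |q' - q| < δ₀ := lt_of_lt_of_le hq (min_le_left _ _)
    have hp1 : |p' - 0| < δ₀ := lt_of_lt_of_le hp' (min_le_left _ _)
    have ht1 : |t' - t| < δ₀ := lt_of_lt_of_le ht (min_le_left _ _)
    have hGd := hδ (dist3 hq1 hp1 ht1)
    rw [Prod.dist_eq, Prod.dist_eq] at hGd
    simp only [Real.dist_eq, hG] at hGd
    set B' : ℝ := (μ / l) * |a t' * Real.cos q' - l * p' ^ 2 + g * Real.sin q'| with hB'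
    set B0 : ℝ := (μ / l) * |a t * Real.cos q - l * (0:ℝ) ^ 2 + g * Real.sin q| with hB0
    have hA : |(a t' / l) * Real.sin q' - (a t / l) * Real.sin q| < ε/3 :=
      lt_of_le_of_lt (le_max_left _ _) hGd
    have hB : |B' - B0| < ε/3 :=
      lt_of_le_of_lt (le_trans (le_max_left _ _) (le_max_right _ _)) hGd
    have hC : |(g / l) * Real.cos q' - (g / l) * Real.cos q| < ε/3 :=
      lt_of_le_of_lt (le_trans (le_max_right _ _) (le_max_right _ _)) hGd
    have key : ∀ s : ℝ, |s| ≤ 1 →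
        |hRHS l g μ a q' p' t' s - hRHS l g μ a q 0 t s| < ε := by
      intro s hs
      have e : hRHS l g μ a q' p' t' s - hRHS l g μ a q 0 t s
          = ((a t' / l) * Real.sin q' - (a t / l) * Real.sin q)
          + (-((B' - B0) * s))
          + (-((g / l) * Real.cos q' - (g / l) * Real.cos q)) := by
        rw [hB', hB0]; unfold hRHS; ring
      rw [e]
      have h1 := abs_add_three ((a t' / l) * Real.sin q' - (a t / l) * Real.sin q)
        (-((B' - B0) * s))
        (-((g / l) * Real.cos q' - (g / l) * Real.cos q))
      rw [abs_neg, abs_neg, abs_mul] at h1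
      have h2 : |B' - B0| * |s| ≤ |B' - B0| :=
        mul_le_of_le_one_right (abs_nonneg _) hs
      calc _ ≤ _ := h1
        _ < ε := by linarith
    by_cases hp'0 : p' = 0
    · subst hp'0
      simp only [Phi, ne_eq, not_true_eq_false, if_false, Set.mem_setOf_eq] at hw
      obtain ⟨s, hs, rfl⟩ := hw
      have hmem : ((0 : ℝ), hRHS l g μ a q 0 t s) ∈ Phi l g μ a q 0 t := by
        simp only [Phi, ne_eq, not_true_eq_false, if_false, Set.mem_setOf_eq]
        exact ⟨s, hs, rfl⟩
      refine lt_of_le_of_lt (Metric.infDist_le_dist_of_mem hmem) ?_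
      rw [Prod.dist_eq]
      simp only [Real.dist_eq, sub_self, abs_zero]
      refine max_lt (by positivity) ?_
      exact key s (abs_le.mpr ⟨hs.1, hs.2⟩)
    · simp only [Phi, ne_eq, hp'0, not_false_eq_true, if_true, Set.mem_singleton_iff] at hw
      subst hw
      set σ := p' / |p'| with hσ
      have hσ1 : |σ| ≤ 1 := by
        rw [hσ, abs_div, abs_abs, div_self (abs_ne_zero.mpr hp'0)]
      have hmem : ((0 : ℝ), hRHS l g μ a q 0 t σ) ∈ Phi l g μ a q 0 t := by
        simp only [Phi, ne_eq, not_true_eq_false, if_false, Set.mem_setOf_eq]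
        exact ⟨σ, abs_le.mp hσ1, rfl⟩
      refine lt_of_le_of_lt (Metric.infDist_le_dist_of_mem hmem) ?_
      rw [Prod.dist_eq]
      simp only [Real.dist_eq, sub_zero]
      refine max_lt ?_ (key σ hσ1)
      have : |p' - 0| < ε / 2 := lt_of_lt_of_le hp' (min_le_right _ _)
      rw [sub_zero] at this
      linarith
  · -- p ≠ 0 case
    set σ := p / |p| with hσ
    set F : ℝ × ℝ × ℝ → ℝ × ℝ := fun x => (x.2.1, hRHS l g μ a x.1 x.2.1 x.2.2 σ) with hF
    have hcont : ContinuousAt F (q, p, t) := by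
      apply Continuous.continuousAt
      rw [hF]
      unfold hRHS
      fun_prop
    obtain ⟨δ₀, hδ₀, hδ⟩ := Metric.continuousAt_iff.mp hcont ε hε
    refine ⟨min δ₀ |p|, lt_min hδ₀ (abs_pos.mpr hp), ?_⟩
    intro q' p' t' hq hp' ht w hw
    obtain ⟨hp'0, hσ'⟩ := sign_div_eq hp (lt_of_lt_of_le hp' (min_le_right _ _))
    simp only [Phi, ne_eq, hp'0, not_false_eq_true, if_true, Set.mem_singleton_iff] at hw
    subst hw
    have hmem : ((p : ℝ), hRHS l g μ a q p t σ) ∈ Phi l g μ a q p t := by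
      simp only [Phi, ne_eq, hp, not_false_eq_true, if_true, Set.mem_singleton_iff]
      rfl
    refine lt_of_le_of_lt (Metric.infDist_le_dist_of_mem hmem) ?_
    have hq1 : |q' - q| < δ₀ := lt_of_lt_of_le hq (min_le_left _ _)
    have hp1 : |p' - p| < δ₀ := lt_of_lt_of_le hp' (min_le_left _ _)
    have ht1 : |t' - t| < δ₀ := lt_of_lt_of_le ht (min_le_left _ _)
    have := hδ (dist3 hq1 hp1 ht1)
    rw [hσ'] at *
    exact this
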